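/- Fix integers m ≥ 2 and 1 ≤ ῑ ≤ m−1. For each integer κ ≥ 1, let R(κ) be the real matrix with κ·ῑ rows, indexed by pairs (k, ς) with k ∈ {1,…,κ} and ς ∈ {0,…,ῑ−1}, and (κ+1)·m columns, indexed by pairs (j, l) with j ∈ {1,…,κ+1} and l ∈ {0,…,m−1}, whose only nonzero entries are R(κ)[(k,ς),(k,l)] = P̄_l^{(ς)}(1) and R(κ)[(k,ς),(k+1,l)] = −P̄_l^{(ς)}(−1) for l ∈ {0,…,m−1}, where P̄_l := √((2l+1)/2)·P_l is the normalized Legendre polynomial and P̄_l^{(ς)} its ς-th derivative. Then there exist constants 0 < c ≤ C depending only on m and ῑ (not on κ) such that c ≤ λ_min(R(κ)·R(κ)') ≤ λ_max(R(κ)·R(κ)') ≤ C for every κ ≥ 1. (Lemma 7.1 of the supplement: uniform eigenvalue bounds for the spline continuity-restriction matrix.) -/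

import Mathlib

open MeasureTheory Filter Metric Matrix
open scoped BigOperators ENNReal

noncomputable section

/-- Euclidean space `ℝ^d`. -/
abbrev Euc (d : ℕ) := EuclideanSpace ℝ (Fin d)

/-- Order `[q]` of a multi-index. -/
def mOrder {d : ℕ} (q : Fin d → ℕ) : ℕ := ∑ i, q i

/-- Partial derivative in the `i`-th coordinate direction. -/
noncomputable def lineD {d : ℕ} (i : Fin d) (f : Euc d → ℝ) : Euc d → ℝ :=
  fun x => lineDeriv ℝ f x (EuclideanSpace.single i 1)

/-- Multi-index partial derivative `∂^q f`. -/
noncomputable def mderiv {d : ℕ} (q : Fin d → ℕ) (f : Euc d → ℝ) : Euc d → ℝ :=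
  (List.finRange d).foldr (fun i g => (lineD i)^[q i] g) f

/-- Euclidean norm of a vector in `ℝ^K`. -/
noncomputable def eNorm {K : ℕ} (v : Fin K → ℝ) : ℝ := Real.sqrt (∑ k, v k ^ 2)

/-- Sup-norm of a vector. -/
noncomputable def vSupNorm {K : ℕ} (v : Fin K → ℝ) : ℝ := ⨆ k, |v k|

/-- Quadratic form `v'Av`. -/
def quadForm {ι : Type*} [Fintype ι] (A : Matrix ι ι ℝ) (v : ι → ℝ) : ℝ :=
  ∑ k, ∑ l, v k * A k l * v l

/-- Minimum eigenvalue of a symmetric matrix, as the infimum of its Rayleigh quotient. -/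
noncomputable def lamMin {ι : Type*} [Fintype ι] (A : Matrix ι ι ℝ) : ℝ :=
  sInf {r | ∃ v : ι → ℝ, ∑ k, v k ^ 2 = 1 ∧ r = quadForm A v}

/-- Maximum eigenvalue of a symmetric matrix, as the supremum of its Rayleigh quotient. -/
noncomputable def lamMax {ι : Type*} [Fintype ι] (A : Matrix ι ι ℝ) : ℝ :=
  sSup {r | ∃ v : ι → ℝ, ∑ k, v k ^ 2 = 1 ∧ r = quadForm A v}

/-- Maximum absolute row-sum norm `‖A‖_∞` of a matrix. -/
noncomputable def rowSumNorm {ι : Type*} [Fintype ι] (A : Matrix ι ι ℝ) : ℝ :=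
  ⨆ k, ∑ l, |A k l|

/-- Spectral norm (`ℓ²`-operator norm) of a matrix. -/
noncomputable def specNorm {ι : Type*} [Fintype ι] [DecidableEq ι] (A : Matrix ι ι ℝ) : ℝ :=
  ‖LinearMap.toContinuousLinearMap (Matrix.toEuclideanLin A)‖

/-- Open polyhedron: a finite intersection of open halfspaces. -/
def IsOpenPolyhedron {d : ℕ} (s : Set (Euc d)) : Prop :=
  ∃ (N : ℕ) (a : Fin N → Euc d) (b : Fin N → ℝ),
    s = {x | ∀ i, (inner ℝ (a i) x : ℝ) < b i}

/-- The `l`-th Legendre polynomial, via the Rodrigues formula. -/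
noncomputable def legendreP (l : ℕ) : ℝ → ℝ :=
  fun x => (1 / (2 ^ l * (l.factorial : ℝ))) * iteratedDeriv l (fun y => (y ^ 2 - 1) ^ l) x

/-- The normalized Legendre polynomial `P̄_l = √((2l+1)/2)·P_l`. -/
noncomputable def legendreNorm (l : ℕ) : ℝ → ℝ :=
  fun x => Real.sqrt ((2 * l + 1) / 2) * legendreP l x


namespace St18
open Polynomial Matrix Complex

/-! ### Polynomial facts for Legendre polynomials -/

lemma iteratedDeriv_eval (p : ℝ[X]) (n : ℕ) :
    iteratedDeriv n (fun x => p.eval x) = fun x => ((derivative (R := ℝ))^[n] p).eval x := by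
  induction n with
  | zero => simp
  | succ n ih =>
    rw [iteratedDeriv_succ, ih]
    funext x
    rw [Function.iterate_succ_apply']
    exact Polynomial.deriv _

noncomputable def legPoly (l : ℕ) : ℝ[X] :=
  Polynomial.C (1 / (2 ^ l * (l.factorial : ℝ))) * (derivative (R := ℝ))^[l] ((X ^ 2 - 1) ^ l)

lemma legendreP_eval (l : ℕ) (x : ℝ) : legendreP l x = (legPoly l).eval x := by
  have h : (fun y : ℝ => (y ^ 2 - 1) ^ l) = fun y => (((X : ℝ[X]) ^ 2 - 1) ^ l).eval y := by
    funext y; simp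
  rw [legendreP, h, iteratedDeriv_eval, legPoly]
  simp

noncomputable def normPoly (l : ℕ) : ℝ[X] :=
  Polynomial.C (Real.sqrt ((2 * l + 1) / 2)) * legPoly l

lemma legendreNorm_eval (l : ℕ) (x : ℝ) : legendreNorm l x = (normPoly l).eval x := by
  rw [legendreNorm, legendreP_eval, normPoly]; simp

lemma legendreNorm_fun (l : ℕ) : legendreNorm l = fun x => (normPoly l).eval x :=
  funext (legendreNorm_eval l)

lemma monic_base (l : ℕ) : (((X : ℝ[X]) ^ 2 - 1) ^ l).Monic := by
  have h : ((X : ℝ[X]) ^ 2 - 1) = X ^ 2 - C 1 := by norm_num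
  rw [h]
  exact (monic_X_pow_sub_C (1 : ℝ) two_ne_zero).pow l

lemma natDegree_base (l : ℕ) : (((X : ℝ[X]) ^ 2 - 1) ^ l).natDegree = 2 * l := by
  have h : ((X : ℝ[X]) ^ 2 - 1) = X ^ 2 - C 1 := by norm_num
  rw [h, natDegree_pow, natDegree_X_pow_sub_C, mul_comm]

lemma iter_ne_and_deg (l : ℕ) :
    ((derivative (R := ℝ))^[l] ((X ^ 2 - 1) ^ l)).natDegree = l ∧
    (derivative (R := ℝ))^[l] ((X ^ 2 - 1) ^ l) ≠ 0 := by
  set q : ℝ[X] := (X ^ 2 - 1) ^ l with hq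
  have hdeg : q.natDegree = 2 * l := natDegree_base l
  have hcoeff : ((derivative (R := ℝ))^[l] q).coeff l ≠ 0 := by
    rw [coeff_iterate_derivative]
    have h2 : l + l = 2 * l := by ring
    have hc1 : q.coeff (2 * l) = 1 := by
      have := (monic_base l).coeff_natDegree
      rwa [← hq, hdeg] at this
    rw [h2, hc1, nsmul_eq_mul, mul_one]
    have : (2 * l).descFactorial l ≠ 0 := by
      rw [ne_eq, Nat.descFactorial_eq_zero_iff_lt]; omega
    exact_mod_cast this
  have hle : ((derivative (R := ℝ))^[l] q).natDegree ≤ l := by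
    have := natDegree_iterate_derivative q l
    omega
  have hge : l ≤ ((derivative (R := ℝ))^[l] q).natDegree := le_natDegree_of_ne_zero hcoeff
  exact ⟨le_antisymm hle hge, fun h => hcoeff (by simp [h])⟩

lemma legPoly_natDegree (l : ℕ) : (legPoly l).natDegree = l := by
  rw [legPoly, natDegree_C_mul, (iter_ne_and_deg l).1]
  positivity

lemma legPoly_ne_zero (l : ℕ) : legPoly l ≠ 0 := by
  refine mul_ne_zero ?_ (iter_ne_and_deg l).2
  simp only [ne_eq, C_eq_zero]
  positivity

lemma normPoly_natDegree (l : ℕ) : (normPoly l).natDegree = l := by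
  rw [normPoly, natDegree_C_mul, legPoly_natDegree]
  positivity

lemma normPoly_ne_zero (l : ℕ) : normPoly l ≠ 0 := by
  refine mul_ne_zero ?_ (legPoly_ne_zero l)
  simp only [ne_eq, C_eq_zero]
  positivity

/-! ### Complexified polynomials -/

noncomputable def qC (l : ℕ) : ℂ[X] := (normPoly l).map (algebraMap ℝ ℂ)

lemma qC_natDegree (l : ℕ) : (qC l).natDegree = l := by
  rw [qC, natDegree_map_eq_of_injective (algebraMap ℝ ℂ).injective, normPoly_natDegree]

lemma qC_ne_zero (l : ℕ) : qC l ≠ 0 := by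
  simpa [qC, Polynomial.map_eq_zero_iff (algebraMap ℝ ℂ).injective] using normPoly_ne_zero l

lemma eval_iter_map (p : ℝ[X]) (ς : ℕ) (x : ℝ) :
    ((derivative (R := ℂ))^[ς] (p.map (algebraMap ℝ ℂ))).eval ((x : ℂ)) =
      ((((derivative (R := ℝ))^[ς] p).eval x : ℝ) : ℂ) := by
  rw [iterate_derivative_map]
  rw [show ((x : ℂ)) = algebraMap ℝ ℂ x from rfl]
  rw [eval_map, eval₂_at_apply]
  rfl

/-! ### The linear functional and the full-rank argument -/

noncomputable def Lmap (ι : ℕ) (x : Fin ι → ℂ) (z : ℂ) : ℂ[X] →ₗ[ℂ] ℂ :=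
  ∑ ς : Fin ι, x ς • ((leval (1:ℂ) - z • leval (-1:ℂ)) ∘ₗ
    ((Polynomial.derivative : ℂ[X] →ₗ[ℂ] ℂ[X]) ^ (ς:ℕ)))

lemma Lmap_apply (ι : ℕ) (x : Fin ι → ℂ) (z : ℂ) (p : ℂ[X]) :
    Lmap ι x z p = ∑ ς : Fin ι,
      x ς * (((derivative (R := ℂ))^[(ς:ℕ)] p).eval 1
        - z * ((derivative (R := ℂ))^[(ς:ℕ)] p).eval (-1)) := by
  simp [Lmap, LinearMap.sum_apply, LinearMap.smul_apply, LinearMap.comp_apply,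
    Module.End.pow_apply, leval_apply, smul_eq_mul]

lemma span_vanish {m : ℕ} (q : ℕ → ℂ[X])
    (hdeg : ∀ l, l < m → (q l).natDegree = l) (hne : ∀ l, l < m → q l ≠ 0)
    (L : ℂ[X] →ₗ[ℂ] ℂ) (hL : ∀ l, l < m → L (q l) = 0) :
    ∀ p : ℂ[X], p.natDegree < m → L p = 0 := by
  suffices H : ∀ n, n ≤ m → ∀ p : ℂ[X], p.natDegree < n → L p = 0 by
    intro p hp; exact H m le_rfl p hp
  intro n
  induction n with
  | zero => intro _ p hp; omega
  | succ n ih =>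
    intro hnm p hp
    by_cases hp0 : p = 0
    · simp [hp0]
    by_cases hlt : p.natDegree < n
    · exact ih (by omega) p hlt
    have hdn : p.natDegree = n := by omega
    have hqn : q n ≠ 0 := hne n (by omega)
    have hqd : (q n).natDegree = n := hdeg n (by omega)
    have hlcq : (q n).coeff n ≠ 0 := by
      have := leadingCoeff_ne_zero.mpr hqn
      rwa [leadingCoeff, hqd] at this
    set a : ℂ := p.coeff n / (q n).coeff n with ha
    set r : ℂ[X] := p - a • q n with hr
    have hpr : p = r + a • q n := by rw [hr]; ring
    have hrc : r.coeff n = 0 := by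
      rw [hr, coeff_sub, coeff_smul, ha, smul_eq_mul]
      field_simp; ring
    have hLr : L r = 0 := by
      by_cases hr0 : r = 0
      · simp [hr0]
      refine ih (by omega) r ?_
      have hle : r.natDegree ≤ n := by
        rw [hr]
        refine le_trans (natDegree_sub_le _ _) ?_
        simp only [max_le_iff]
        exact ⟨le_of_eq hdn, le_trans (natDegree_smul_le _ _) (le_of_eq hqd)⟩
      rcases lt_or_eq_of_le hle with h | h
      · exact h
      · exfalso
        have hlc := leadingCoeff_ne_zero.mpr hr0
        rw [leadingCoeff, h] at hlc
        exact hlc hrc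
    rw [hpr, _root_.map_add, _root_.map_smul, hLr, hL n (by omega), smul_eq_mul, mul_zero, add_zero]

lemma Lmap_X_pow (ι : ℕ) (x : Fin ι → ℂ) (z : ℂ) (n : ℕ) :
    Lmap ι x z (X ^ n) = ∑ ς : Fin ι,
      x ς * ((n.descFactorial (ς:ℕ) : ℂ) * (1 - z * (-1) ^ (n - (ς:ℕ)))) := by
  rw [Lmap_apply]
  refine Finset.sum_congr rfl fun ς _ => ?_
  rw [iterate_derivative_X_pow_eq_smul]
  simp only [eval_smul, eval_pow, eval_X, one_pow, smul_eq_mul, mul_one,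
    nsmul_eq_mul]
  ring

lemma coeff_vanish (m ι : ℕ) (hm : 2 ≤ m) (hιm : ι ≤ m - 1) (z : ℂ) (x : Fin ι → ℂ)
    (hX : ∀ n, n < m → Lmap ι x z (X ^ n) = 0) : x = 0 := by
  have key : ∀ j : ℕ, ∀ s : Fin ι, (s : ℕ) = j → x s = 0 := by
    intro j
    induction j using Nat.strong_induction_on with
    | _ j ih =>
      intro s hs
      have hsι : j < ι := hs ▸ s.2
      by_cases hz : z = 1
      · have hj1 : j + 1 < m := by omega
        have hC := hX (j+1) hj1
        rw [Lmap_X_pow, Finset.sum_eq_single s] at hC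
        · have h1 : (j + 1) - j = 1 := by omega
          rw [hs, h1, hz] at hC
          have hd : ((j+1).descFactorial j : ℂ) ≠ 0 := by
            have : (j+1).descFactorial j ≠ 0 := by
              rw [ne_eq, Nat.descFactorial_eq_zero_iff_lt]; omega
            exact_mod_cast this
          have : (1 : ℂ) - 1 * (-1) ^ 1 = 2 := by ring
          rw [this] at hC
          rcases mul_eq_zero.mp hC with h | h
          · exact h
          · exact absurd h (mul_ne_zero hd two_ne_zero)
        · intro ς _ hne
          rcases lt_trichotomy (ς : ℕ) j with h1 | h1 | h1
          · rw [ih (ς : ℕ) h1 ς rfl]; ring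
          · exact absurd (Fin.ext (h1.trans hs.symm)) hne
          · rcases eq_or_lt_of_le (Nat.succ_le_of_lt h1) with h2 | h2
            · have h3 : (j + 1) - (ς : ℕ) = 0 := by omega
              rw [h3, hz]
              norm_num [← h2]
            · have : (j+1).descFactorial (ς : ℕ) = 0 := by
                rw [Nat.descFactorial_eq_zero_iff_lt]; omega
              rw [this]
              norm_num
        · intro h; exact absurd (Finset.mem_univ s) h
      · have hj : j < m := by omega
        have hC := hX j hj
        rw [Lmap_X_pow, Finset.sum_eq_single s] at hC
        · have h1 : j - j = 0 := by omega
          rw [hs, h1, Nat.descFactorial_self] at hC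
          have hd : ((j.factorial : ℂ)) ≠ 0 := by
            exact_mod_cast j.factorial_ne_zero
          have hz' : (1 : ℂ) - z * (-1) ^ 0 ≠ 0 := by
            simpa [sub_eq_zero] using fun h => hz h.symm
          simp only [mul_eq_zero] at hC
          rcases hC with h | h | h
          · exact h
          · exact absurd h hd
          · exact absurd h hz'
        · intro ς _ hne
          rcases lt_trichotomy (ς : ℕ) j with h1 | h1 | h1
          · rw [ih (ς : ℕ) h1 ς rfl]; ring
          · exact absurd (Fin.ext (h1.trans hs.symm)) hne
          · have : j.descFactorial (ς : ℕ) = 0 := by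
              rw [Nat.descFactorial_eq_zero_iff_lt]; omega
            rw [this]
            norm_num
        · intro h; exact absurd (Finset.mem_univ s) h
  funext s
  exact key (s : ℕ) s rfl

/-! ### Uniform bounds on the symbol -/

lemma upper_bound (m ι : ℕ) (a b : Fin ι → Fin m → ℝ) (z : ℂ) (hz : ‖z‖ = 1)
    (x : Fin ι → ℂ) :
    ∑ l : Fin m, Complex.normSq (∑ ς, x ς * ((a ς l : ℂ) + z * (b ς l : ℂ))) ≤
      (∑ l : Fin m, ∑ ς : Fin ι, (|a ς l| + |b ς l|) ^ 2) * ∑ ς, Complex.normSq (x ς) := by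
  have key : ∀ l : Fin m,
      Complex.normSq (∑ ς, x ς * ((a ς l : ℂ) + z * (b ς l : ℂ))) ≤
        (∑ ς : Fin ι, (|a ς l| + |b ς l|) ^ 2) * ∑ ς, Complex.normSq (x ς) := by
    intro l
    have h1 : ‖(∑ ς, x ς * ((a ς l : ℂ) + z * (b ς l : ℂ)))‖ ≤
        ∑ ς, ‖x ς‖ * (|a ς l| + |b ς l|) := by
      refine le_trans (norm_sum_le _ _) (Finset.sum_le_sum fun ς _ => ?_)
      rw [norm_mul]
      refine mul_le_mul_of_nonneg_left ?_ (norm_nonneg _)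
      refine le_trans (norm_add_le _ _) ?_
      rw [norm_mul, Complex.norm_real, Complex.norm_real,
        hz, one_mul, Real.norm_eq_abs, Real.norm_eq_abs]
    have h2 : Complex.normSq (∑ ς, x ς * ((a ς l : ℂ) + z * (b ς l : ℂ))) ≤
        (∑ ς, ‖x ς‖ * (|a ς l| + |b ς l|)) ^ 2 := by
      rw [← Complex.sq_norm]
      exact pow_le_pow_left₀ (norm_nonneg _) h1 2
    refine le_trans h2 ?_
    calc (∑ ς, ‖x ς‖ * (|a ς l| + |b ς l|)) ^ 2
        ≤ (∑ ς, ‖x ς‖ ^ 2) * ∑ ς : Fin ι, (|a ς l| + |b ς l|) ^ 2 :=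
          Finset.sum_mul_sq_le_sq_mul_sq _ _ _
      _ = (∑ ς : Fin ι, (|a ς l| + |b ς l|) ^ 2) * ∑ ς, Complex.normSq (x ς) := by
          rw [mul_comm]
          congr 1
          exact Finset.sum_congr rfl fun ς _ => Complex.sq_norm _
  calc ∑ l : Fin m, Complex.normSq (∑ ς, x ς * ((a ς l : ℂ) + z * (b ς l : ℂ)))
      ≤ ∑ l : Fin m, (∑ ς : Fin ι, (|a ς l| + |b ς l|) ^ 2) * ∑ ς, Complex.normSq (x ς) :=
        Finset.sum_le_sum fun l _ => key l
    _ = (∑ l : Fin m, ∑ ς : Fin ι, (|a ς l| + |b ς l|) ^ 2) * ∑ ς, Complex.normSq (x ς) := by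
        rw [Finset.sum_mul]

lemma lower_bound (m ι : ℕ) (hι1 : 1 ≤ ι) (a b : Fin ι → Fin m → ℝ)
    (hrank : ∀ z : ℂ, ‖z‖ = 1 → ∀ x : Fin ι → ℂ,
      (∀ l : Fin m, ∑ ς, x ς * ((a ς l : ℂ) + z * (b ς l : ℂ)) = 0) → x = 0) :
    ∃ c > 0, ∀ z : ℂ, ‖z‖ = 1 → ∀ x : Fin ι → ℂ,
      c * (∑ ς, Complex.normSq (x ς)) ≤
        ∑ l : Fin m, Complex.normSq (∑ ς, x ς * ((a ς l : ℂ) + z * (b ς l : ℂ))) := by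
  classical
  set g : ℂ × EuclideanSpace ℂ (Fin ι) → ℝ := fun p =>
    ∑ l : Fin m, Complex.normSq (∑ ς, p.2 ς * ((a ς l : ℂ) + p.1 * (b ς l : ℂ))) with hg
  have hgc : Continuous g := by
    refine continuous_finset_sum _ fun l _ => Complex.continuous_normSq.comp ?_
    refine continuous_finset_sum _ fun ς _ => Continuous.mul ?_ ?_
    · exact (EuclideanSpace.proj ς).continuous.comp continuous_snd
    · exact continuous_const.add (continuous_fst.mul continuous_const)
  set S : Set (ℂ × EuclideanSpace ℂ (Fin ι)) :=
    Metric.sphere 0 1 ×ˢ Metric.sphere 0 1 with hSdef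
  have hS : IsCompact S := (isCompact_sphere _ _).prod (isCompact_sphere _ _)
  have hne : S.Nonempty := by
    refine ⟨(1, EuclideanSpace.single ⟨0, hι1⟩ 1), ?_, ?_⟩
    · simp
    · simp [EuclideanSpace.norm_single]
  obtain ⟨p₀, hp₀, hmin⟩ := hS.exists_isMinOn hne hgc.continuousOn
  have hp₀1 : ‖p₀.1‖ = 1 := by
    have := hp₀.1
    simpa [mem_sphere_iff_norm] using this
  have hp₀2 : ‖p₀.2‖ = 1 := by
    have := hp₀.2
    simpa [mem_sphere_iff_norm] using this
  have hgpos : 0 < g p₀ := by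
    rcases lt_or_eq_of_le (Finset.sum_nonneg (fun l _ => Complex.normSq_nonneg _) :
        (0:ℝ) ≤ g p₀) with h | h
    · exact h
    exfalso
    have hzero : ∀ l : Fin m, ∑ ς, p₀.2 ς * ((a ς l : ℂ) + p₀.1 * (b ς l : ℂ)) = 0 := by
      intro l
      have hterm := (Finset.sum_eq_zero_iff_of_nonneg
        (fun l _ => Complex.normSq_nonneg _)).mp h.symm l (Finset.mem_univ _)
      exact Complex.normSq_eq_zero.mp hterm
    have hx0 := hrank p₀.1 hp₀1 (fun ς => p₀.2 ς) hzero
    have h20 : p₀.2 = 0 := PiLp.ext fun ς => by simpa using congrFun hx0 ς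
    rw [h20] at hp₀2
    simp at hp₀2
  refine ⟨g p₀, hgpos, ?_⟩
  intro z hz x
  set N : ℝ := Real.sqrt (∑ ς, Complex.normSq (x ς)) with hN
  have hsum_nonneg : (0:ℝ) ≤ ∑ ς, Complex.normSq (x ς) :=
    Finset.sum_nonneg fun _ _ => Complex.normSq_nonneg _
  have hN2 : N ^ 2 = ∑ ς, Complex.normSq (x ς) := Real.sq_sqrt hsum_nonneg
  by_cases hN0 : N = 0
  · have h0 : ∑ ς, Complex.normSq (x ς) = 0 := by rw [← hN2, hN0]; ring
    rw [h0, mul_zero]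
    exact Finset.sum_nonneg fun _ _ => Complex.normSq_nonneg _
  have hNpos : 0 < N := lt_of_le_of_ne (Real.sqrt_nonneg _) (Ne.symm hN0)
  set y : EuclideanSpace ℂ (Fin ι) := WithLp.toLp 2 (fun ς => ((N⁻¹ : ℝ) : ℂ) * x ς) with hy
  have hynorm : ‖y‖ = 1 := by
    rw [EuclideanSpace.norm_eq]
    have hterm : ∀ ς, ‖y ς‖ ^ 2 = (N⁻¹)^2 * Complex.normSq (x ς) := by
      intro ς
      rw [hy]
      simp only [PiLp.toLp_apply, norm_mul, Complex.norm_real, Real.norm_eq_abs,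
        abs_of_pos (inv_pos.mpr hNpos), mul_pow]
      rw [← Complex.sq_norm]
    rw [Finset.sum_congr rfl fun ς _ => hterm ς, ← Finset.mul_sum, ← hN2]
    rw [show (N⁻¹)^2 * N^2 = 1 by field_simp]
    exact Real.sqrt_one
  have hmem : (z, y) ∈ S := by
    refine ⟨?_, ?_⟩
    · simpa [mem_sphere_iff_norm] using hz
    · simpa [mem_sphere_iff_norm] using hynorm
  have hle : g p₀ ≤ g (z, y) := hmin hmem
  have hgy : g (z, y) = (N⁻¹)^2 *
      ∑ l : Fin m, Complex.normSq (∑ ς, x ς * ((a ς l : ℂ) + z * (b ς l : ℂ))) := by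
    rw [hg]
    simp only
    rw [Finset.mul_sum]
    refine Finset.sum_congr rfl fun l _ => ?_
    have hcast : ∑ ς, y ς * ((a ς l : ℂ) + z * (b ς l : ℂ)) =
        ((N⁻¹ : ℝ) : ℂ) * ∑ ς, x ς * ((a ς l : ℂ) + z * (b ς l : ℂ)) := by
      rw [Finset.mul_sum]
      exact Finset.sum_congr rfl fun ς _ => by rw [hy, PiLp.toLp_apply]; ring
    rw [hcast, Complex.normSq_mul, Complex.normSq_ofReal]
    ring
  rw [hgy] at hle
  have hfin := mul_le_mul_of_nonneg_left hle (le_of_lt (pow_pos hNpos 2))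
  calc g p₀ * ∑ ς, Complex.normSq (x ς) = N ^ 2 * g p₀ := by rw [hN2]; ring
    _ ≤ N ^ 2 * ((N⁻¹)^2 * _) := hfin
    _ = ∑ l : Fin m, Complex.normSq (∑ ς, x ς * ((a ς l : ℂ) + z * (b ς l : ℂ))) := by
        field_simp

/-! ### Discrete Fourier analysis on `ZMod n` -/

noncomputable def zeta (n : ℕ) : ℂ := Complex.exp (2 * Real.pi * I / n)

variable (n : ℕ) [NeZero n]

lemma zeta_prim : IsPrimitiveRoot (zeta n) n :=
  Complex.isPrimitiveRoot_exp n (NeZero.ne n)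

lemma zeta_pow_n : (zeta n) ^ n = 1 := (zeta_prim n).pow_eq_one

lemma zeta_pow_mod (k : ℕ) : (zeta n) ^ (k % n) = (zeta n) ^ k := by
  conv_rhs => rw [← Nat.div_add_mod k n]
  rw [pow_add, pow_mul, zeta_pow_n, one_pow, one_mul]

lemma zeta_abs : ‖zeta n‖ = 1 := by
  have h1 : ‖zeta n‖ ^ n = 1 := by
    rw [← norm_pow, zeta_pow_n, norm_one]
  rcases lt_trichotomy (‖zeta n‖) 1 with h | h | h
  · exfalso
    have := pow_lt_one₀ (norm_nonneg _) h (NeZero.ne n)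
    rw [h1] at this; exact lt_irrefl _ this
  · exact h
  · exfalso
    have := one_lt_pow₀ h (NeZero.ne n)
    rw [h1] at this; exact lt_irrefl _ this

noncomputable def psi (j : ZMod n) : ℂ := (zeta n) ^ j.val

lemma psi_abs (j : ZMod n) : ‖psi n j‖ = 1 := by
  rw [psi, norm_pow, zeta_abs, one_pow]

lemma psi_add (a b : ZMod n) : psi n (a + b) = psi n a * psi n b := by
  rw [psi, psi, psi, ZMod.val_add, zeta_pow_mod, pow_add]

lemma psi_zero : psi n 0 = 1 := by
  rw [psi, ZMod.val_zero, pow_zero]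

lemma psi_neg (a : ZMod n) : psi n (-a) = (psi n a)⁻¹ := by
  have h : psi n a * psi n (-a) = 1 := by
    rw [← psi_add, add_neg_cancel, psi_zero]
  exact eq_inv_of_mul_eq_one_left (by rw [mul_comm] at h; exact h)

lemma psi_conj (a : ZMod n) : (starRingEnd ℂ) (psi n a) = psi n (-a) := by
  rw [psi_neg]
  rw [Complex.inv_def]
  have h : Complex.normSq (psi n a) = 1 := by
    have := psi_abs n a
    rw [← Complex.sq_norm, this, one_pow]
  rw [h]
  simp

lemma psi_mul_val (d t : ZMod n) : psi n (d * t) = ((zeta n) ^ d.val) ^ t.val := by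
  rw [psi, ZMod.val_mul, zeta_pow_mod, pow_mul]

lemma ortho (d : ZMod n) (hd : d ≠ 0) : ∑ t : ZMod n, psi n (d * t) = 0 := by
  have hsum : ∑ t : ZMod n, psi n (d * t) = ∑ i ∈ Finset.range n, ((zeta n) ^ d.val) ^ i := by
    rw [Finset.sum_congr rfl fun t _ => psi_mul_val n d t]
    refine Finset.sum_nbij' (fun t => t.val) (fun i => (i : ZMod n)) ?_ ?_ ?_ ?_ ?_
    · intro t _; exact Finset.mem_range.mpr (ZMod.val_lt t)
    · intro i _; exact Finset.mem_univ _
    · intro t _; exact ZMod.natCast_rightInverse t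
    · intro i hi; exact ZMod.val_cast_of_lt (Finset.mem_range.mp hi)
    · intro t _; rfl
  rw [hsum]
  have heta_ne : (zeta n) ^ d.val ≠ 1 := by
    have hdv : 0 < d.val := by
      rcases Nat.eq_zero_or_pos d.val with h | h
      · exact absurd ((ZMod.val_eq_zero d).mp h) hd
      · exact h
    exact (zeta_prim n).pow_ne_one_of_pos_of_lt hdv.ne' (ZMod.val_lt d)
  rw [geom_sum_eq heta_ne, ← pow_mul, mul_comm d.val n, pow_mul, zeta_pow_n, one_pow]
  simp

lemma ortho' (d : ZMod n) : ∑ t : ZMod n, psi n (d * t) = if d = 0 then (n : ℂ) else 0 := by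
  split_ifs with h
  · subst h
    simp only [zero_mul, psi_zero]
    rw [Finset.sum_const, Finset.card_univ, ZMod.card]
    simp
  · exact ortho n d h

lemma parseval (W : ZMod n → ℂ) :
    ∑ t : ZMod n, Complex.normSq (∑ j : ZMod n, W j * psi n (j * t)) =
      n * ∑ j : ZMod n, Complex.normSq (W j) := by
  have key : (∑ t : ZMod n, (Complex.normSq (∑ j : ZMod n, W j * psi n (j * t)) : ℂ)) =
      (n : ℂ) * ∑ j : ZMod n, (Complex.normSq (W j) : ℂ) := by
    calc ∑ t : ZMod n, (Complex.normSq (∑ j : ZMod n, W j * psi n (j * t)) : ℂ)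
        = ∑ t : ZMod n, (∑ j : ZMod n, W j * psi n (j * t)) *
            (starRingEnd ℂ) (∑ j : ZMod n, W j * psi n (j * t)) :=
          Finset.sum_congr rfl fun t _ => (Complex.mul_conj _).symm
      _ = ∑ t : ZMod n, ∑ j : ZMod n, ∑ k : ZMod n,
            (W j * (starRingEnd ℂ) (W k)) * psi n ((j - k) * t) := by
          refine Finset.sum_congr rfl fun t _ => ?_
          rw [_root_.map_sum, Finset.sum_mul_sum]
          refine Finset.sum_congr rfl fun j _ => Finset.sum_congr rfl fun k _ => ?_
          rw [_root_.map_mul, psi_conj]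
          have h1 : (j - k) * t = j * t + -(k * t) := by ring
          rw [h1, psi_add]
          ring
      _ = ∑ j : ZMod n, ∑ k : ZMod n,
            (W j * (starRingEnd ℂ) (W k)) * ∑ t : ZMod n, psi n ((j - k) * t) := by
          rw [Finset.sum_comm]
          refine Finset.sum_congr rfl fun j _ => ?_
          rw [Finset.sum_comm]
          exact Finset.sum_congr rfl fun k _ => (Finset.mul_sum _ _ _).symm
      _ = ∑ j : ZMod n, W j * (starRingEnd ℂ) (W j) * n := by
          refine Finset.sum_congr rfl fun j _ => ?_
          have h2 : ∀ k : ZMod n, (W j * (starRingEnd ℂ) (W k)) *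
              (∑ t : ZMod n, psi n ((j - k) * t)) =
              if k = j then W j * (starRingEnd ℂ) (W j) * n else 0 := by
            intro k
            rw [ortho']
            by_cases h : k = j
            · subst h; simp
            · have hne : ¬(j - k = 0) := fun hh => h (by
                have := sub_eq_zero.mp hh; exact this.symm)
              simp [hne, h]
          rw [Finset.sum_congr rfl fun k _ => h2 k, Finset.sum_ite_eq' Finset.univ j]
          simp
      _ = (n : ℂ) * ∑ j : ZMod n, (Complex.normSq (W j) : ℂ) := by
          rw [Finset.mul_sum]
          refine Finset.sum_congr rfl fun j _ => ?_
          rw [Complex.mul_conj]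
          ring
  exact_mod_cast key

lemma shift (W : ZMod n → ℂ) (t : ZMod n) :
    ∑ j : ZMod n, W (j - 1) * psi n (j * t) = psi n t * ∑ j : ZMod n, W j * psi n (j * t) := by
  rw [Finset.mul_sum]
  refine Fintype.sum_equiv (Equiv.subRight (1 : ZMod n)) _ _ fun j => ?_
  simp only [Equiv.subRight_apply]
  have h1 : j * t = (j - 1) * t + t := by ring
  rw [h1, psi_add]
  ring

/-! ### The quadratic form of the restriction matrix -/

lemma quad_gram {α β : Type*} [Fintype α] [Fintype β] (R : Matrix α β ℝ) (v : α → ℝ) :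
    quadForm (R * Rᵀ) v = ∑ c : β, (∑ k : α, v k * R k c) ^ 2 := by
  unfold quadForm
  have h1 : ∀ k l : α, v k * (R * Rᵀ) k l * v l =
      ∑ c : β, (v k * R k c) * (v l * R l c) := by
    intro k l
    rw [Matrix.mul_apply]
    simp only [Matrix.transpose_apply]
    rw [Finset.mul_sum, Finset.sum_mul]
    exact Finset.sum_congr rfl fun c _ => by ring
  calc ∑ k, ∑ l, v k * (R * Rᵀ) k l * v l
      = ∑ k : α, ∑ l : α, ∑ c : β, (v k * R k c) * (v l * R l c) :=
        Finset.sum_congr rfl fun k _ => Finset.sum_congr rfl fun l _ => h1 k l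
    _ = ∑ k : α, ∑ c : β, ∑ l : α, (v k * R k c) * (v l * R l c) :=
        Finset.sum_congr rfl fun k _ => Finset.sum_comm
    _ = ∑ c : β, ∑ k : α, ∑ l : α, (v k * R k c) * (v l * R l c) := Finset.sum_comm
    _ = ∑ c : β, (∑ k : α, v k * R k c) ^ 2 := by
        refine Finset.sum_congr rfl fun c _ => ?_
        rw [sq, Finset.sum_mul_sum]

def Rmat (m ι κ : ℕ) (a b : Fin ι → Fin m → ℝ) :
    Matrix (Fin κ × Fin ι) (Fin (κ + 1) × Fin m) ℝ :=
  fun kς jl => if (jl.1 : ℕ) = (kς.1 : ℕ) then a kς.2 jl.2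
    else if (jl.1 : ℕ) = (kς.1 : ℕ) + 1 then b kς.2 jl.2 else 0

lemma quad_bounds (m ι κ : ℕ) (a b : Fin ι → Fin m → ℝ) (c Cb : ℝ)
    (hlow : ∀ z : ℂ, ‖z‖ = 1 → ∀ x : Fin ι → ℂ,
      c * (∑ ς, Complex.normSq (x ς)) ≤
        ∑ l : Fin m, Complex.normSq (∑ ς, x ς * ((a ς l : ℂ) + z * (b ς l : ℂ))))
    (hup : ∀ z : ℂ, ‖z‖ = 1 → ∀ x : Fin ι → ℂ,
      (∑ l : Fin m, Complex.normSq (∑ ς, x ς * ((a ς l : ℂ) + z * (b ς l : ℂ)))) ≤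
        Cb * (∑ ς, Complex.normSq (x ς)))
    (v : Fin κ × Fin ι → ℝ) (hv : ∑ k, v k ^ 2 = 1) :
    c ≤ quadForm (Rmat m ι κ a b * (Rmat m ι κ a b)ᵀ) v ∧
      quadForm (Rmat m ι κ a b * (Rmat m ι κ a b)ᵀ) v ≤ Cb := by
  classical
  set R := Rmat m ι κ a b with hR
  set vnat : Fin ι → ℕ → ℝ := fun ς i => if h : i < κ then v (⟨i, h⟩, ς) else 0 with hvnat
  set V : ZMod (κ + 1) → Fin ι → ℂ := fun j ς => ((vnat ς j.val : ℝ) : ℂ) with hV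
  set U : ZMod (κ + 1) → Fin m → ℂ :=
    fun j l => ∑ ς, (V j ς * (a ς l : ℂ) + V (j - 1) ς * (b ς l : ℂ)) with hU
  have hval1 : ∀ j : Fin (κ + 1), (((j : ℕ) : ZMod (κ + 1))).val = (j : ℕ) :=
    fun j => ZMod.val_cast_of_lt j.isLt
  have hcastkappa : ((κ : ℕ) : ZMod (κ + 1)) = -1 := by
    have h0 : ((κ + 1 : ℕ) : ZMod (κ + 1)) = 0 := ZMod.natCast_self _
    push_cast at h0
    exact eq_neg_of_add_eq_zero_left h0
  have hval2 : ∀ j : Fin (κ + 1), ((((j : ℕ) : ZMod (κ + 1)) - 1)).val =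
      (if (j : ℕ) = 0 then κ else (j : ℕ) - 1) := by
    intro j
    by_cases hj0 : (j : ℕ) = 0
    · rw [hj0, if_pos rfl]
      rw [Nat.cast_zero, zero_sub, ← hcastkappa, ZMod.val_cast_of_lt (by omega)]
    · obtain ⟨s, hs⟩ : ∃ s, (j : ℕ) = s + 1 := ⟨(j : ℕ) - 1, by omega⟩
      rw [if_neg hj0, hs]
      have h1 : ((s + 1 : ℕ) : ZMod (κ + 1)) - 1 = ((s : ℕ) : ZMod (κ + 1)) := by
        push_cast; ring
      rw [h1, ZMod.val_cast_of_lt (by have := j.isLt; omega)]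
      omega
  have hsplit : ∀ (k : Fin κ) (ς : Fin ι) (j : Fin (κ + 1)) (l : Fin m),
      R (k, ς) (j, l) = (if (j : ℕ) = (k : ℕ) then a ς l else 0) +
        (if (j : ℕ) = (k : ℕ) + 1 then b ς l else 0) := by
    intro k ς j l
    rw [hR]
    by_cases h1 : (j : ℕ) = (k : ℕ)
    · have h2 : ¬((j : ℕ) = (k : ℕ) + 1) := by omega
      simp [Rmat, h1, h2]
    · by_cases h2 : (j : ℕ) = (k : ℕ) + 1 <;> simp [Rmat, h1, h2]
  have key_time : ∀ (j : Fin (κ + 1)) (l : Fin m),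
      ((∑ kς : Fin κ × Fin ι, v kς * R kς (j, l) : ℝ) : ℂ) = U ((j : ℕ) : ZMod (κ + 1)) l := by
    intro j l
    have hA : ∀ ς : Fin ι, ∑ k : Fin κ, v (k, ς) * (if (j : ℕ) = (k : ℕ) then a ς l else 0)
        = vnat ς (j : ℕ) * a ς l := by
      intro ς
      by_cases hj : (j : ℕ) < κ
      · rw [Finset.sum_eq_single (⟨(j : ℕ), hj⟩ : Fin κ)]
        · simp [hvnat, hj]
        · intro k _ hk
          have hne : ¬((j : ℕ) = (k : ℕ)) := fun h => hk (Fin.ext h.symm)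
          simp [hne]
        · intro h; exact absurd (Finset.mem_univ _) h
      · have hz : vnat ς (j : ℕ) = 0 := by simp [hvnat, hj]
        rw [hz, zero_mul]
        refine Finset.sum_eq_zero fun k _ => ?_
        have hne : ¬((j : ℕ) = (k : ℕ)) := fun h => hj (h ▸ k.isLt)
        simp [hne]
    have hB : ∀ ς : Fin ι, ∑ k : Fin κ, v (k, ς) * (if (j : ℕ) = (k : ℕ) + 1 then b ς l else 0)
        = vnat ς (if (j : ℕ) = 0 then κ else (j : ℕ) - 1) * b ς l := by
      intro ς
      by_cases hj0 : (j : ℕ) = 0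
      · rw [if_pos hj0]
        have hz : vnat ς κ = 0 := by simp [hvnat]
        rw [hz, zero_mul]
        refine Finset.sum_eq_zero fun k _ => ?_
        have hne : ¬((j : ℕ) = (k : ℕ) + 1) := by omega
        simp [hne]
      · rw [if_neg hj0]
        have hsκ : (j : ℕ) - 1 < κ := by have := j.isLt; omega
        rw [Finset.sum_eq_single (⟨(j : ℕ) - 1, hsκ⟩ : Fin κ)]
        · have hcond : (j : ℕ) = ((⟨(j : ℕ) - 1, hsκ⟩ : Fin κ) : ℕ) + 1 := by
            simp; omega
          rw [if_pos hcond]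
          simp [hvnat, hsκ]
        · intro k _ hk
          have hne : ¬((j : ℕ) = (k : ℕ) + 1) := by
            intro h
            apply hk
            apply Fin.ext
            simp only [Fin.val_mk]
            omega
          simp [hne]
        · intro h; exact absurd (Finset.mem_univ _) h
    have hreal : ∑ kς : Fin κ × Fin ι, v kς * R kς (j, l) =
        ∑ ς : Fin ι, (vnat ς (j : ℕ) * a ς l +
          vnat ς (if (j : ℕ) = 0 then κ else (j : ℕ) - 1) * b ς l) := by
      rw [Fintype.sum_prod_type, Finset.sum_comm]
      refine Finset.sum_congr rfl fun ς _ => ?_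
      rw [← hA ς, ← hB ς, ← Finset.sum_add_distrib]
      refine Finset.sum_congr rfl fun k _ => ?_
      rw [hsplit k ς j l]
      ring
    rw [hreal]
    push_cast
    rw [hU]
    simp only [hV]
    rw [hval1 j]
    refine Finset.sum_congr rfl fun ς _ => ?_
    rw [hval2 j]
  have hquad : quadForm (R * Rᵀ) v = ∑ t : ZMod (κ + 1), ∑ l : Fin m,
      Complex.normSq (U t l) := by
    rw [quad_gram]
    rw [Fintype.sum_prod_type]
    have hterm : ∀ (j : Fin (κ + 1)) (l : Fin m),
        (∑ k : Fin κ × Fin ι, v k * R k (j, l)) ^ 2 =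
          Complex.normSq (U ((j : ℕ) : ZMod (κ + 1)) l) := by
      intro j l
      rw [← key_time j l, Complex.normSq_ofReal]
      ring
    rw [Finset.sum_congr rfl fun j _ => Finset.sum_congr rfl fun l _ => hterm j l]
    refine Finset.sum_nbij' (fun j => ((j : ℕ) : ZMod (κ + 1)))
      (fun t => (⟨t.val, ZMod.val_lt t⟩ : Fin (κ + 1))) ?_ ?_ ?_ ?_ ?_
    · intro j _; exact Finset.mem_univ _
    · intro t _; exact Finset.mem_univ _
    · intro j _; exact Fin.ext (hval1 j)
    · intro t _; exact ZMod.natCast_rightInverse t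
    · intro j _; rfl
  have hnormV : ∑ j : ZMod (κ + 1), ∑ ς : Fin ι, Complex.normSq (V j ς) = 1 := by
    have h1 : ∑ j : ZMod (κ + 1), ∑ ς : Fin ι, Complex.normSq (V j ς)
        = ∑ jf : Fin (κ + 1), ∑ ς : Fin ι, Complex.normSq (V ((jf : ℕ) : ZMod (κ + 1)) ς) := by
      refine Finset.sum_nbij' (fun t => (⟨t.val, ZMod.val_lt t⟩ : Fin (κ + 1)))
        (fun j => ((j : ℕ) : ZMod (κ + 1))) ?_ ?_ ?_ ?_ ?_
      · intro t _; exact Finset.mem_univ _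
      · intro j _; exact Finset.mem_univ _
      · intro t _; exact ZMod.natCast_rightInverse t
      · intro j _; exact Fin.ext (hval1 j)
      · intro t _
        refine Finset.sum_congr rfl fun ς _ => ?_
        congr 2
        exact (ZMod.natCast_rightInverse t).symm
    rw [h1]
    rw [Fin.sum_univ_castSucc]
    have hlast : ∑ ς : Fin ι,
        Complex.normSq (V (((Fin.last κ : Fin (κ + 1)) : ℕ) : ZMod (κ + 1)) ς) = 0 := by
      refine Finset.sum_eq_zero fun ς _ => ?_
      have : vnat ς (((Fin.last κ : Fin (κ + 1)) : ℕ)) = 0 := by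
        simp [hvnat, Fin.val_last]
      simp only [hV]
      rw [hval1 (Fin.last κ), this]
      simp
    rw [hlast, add_zero]
    have hmain : ∀ i : Fin κ, ∑ ς : Fin ι,
        Complex.normSq (V (((i.castSucc : Fin (κ + 1)) : ℕ) : ZMod (κ + 1)) ς)
        = ∑ ς : Fin ι, v (i, ς) ^ 2 := by
      intro i
      refine Finset.sum_congr rfl fun ς _ => ?_
      simp only [hV]
      rw [hval1 i.castSucc]
      have hc : ((i.castSucc : Fin (κ + 1)) : ℕ) = (i : ℕ) := Fin.coe_castSucc i
      rw [hc]
      have : vnat ς (i : ℕ) = v (i, ς) := by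
        simp only [hvnat]
        rw [dif_pos i.isLt]
      rw [this, Complex.normSq_ofReal]
      ring
    rw [Finset.sum_congr rfl fun i _ => hmain i]
    rw [← hv, Fintype.sum_prod_type]
  set F : ZMod (κ + 1) → Fin ι → ℂ :=
    fun t ς => ∑ j : ZMod (κ + 1), V j ς * psi (κ + 1) (j * t) with hF
  have hYfreq : ∀ (t : ZMod (κ + 1)) (l : Fin m),
      ∑ j : ZMod (κ + 1), U j l * psi (κ + 1) (j * t) =
        ∑ ς : Fin ι, F t ς * ((a ς l : ℂ) + psi (κ + 1) t * (b ς l : ℂ)) := by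
    intro t l
    calc ∑ j : ZMod (κ + 1), U j l * psi (κ + 1) (j * t)
        = ∑ j : ZMod (κ + 1), ∑ ς : Fin ι,
            (V j ς * (a ς l : ℂ) * psi (κ + 1) (j * t) +
              V (j - 1) ς * (b ς l : ℂ) * psi (κ + 1) (j * t)) := by
          refine Finset.sum_congr rfl fun j _ => ?_
          rw [hU]
          rw [Finset.sum_mul]
          exact Finset.sum_congr rfl fun ς _ => by ring
      _ = ∑ ς : Fin ι, ∑ j : ZMod (κ + 1),
            (V j ς * (a ς l : ℂ) * psi (κ + 1) (j * t) +
              V (j - 1) ς * (b ς l : ℂ) * psi (κ + 1) (j * t)) := Finset.sum_comm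
      _ = ∑ ς : Fin ι, ((a ς l : ℂ) * ∑ j : ZMod (κ + 1), V j ς * psi (κ + 1) (j * t)
            + (b ς l : ℂ) * ∑ j : ZMod (κ + 1), V (j - 1) ς * psi (κ + 1) (j * t)) := by
          refine Finset.sum_congr rfl fun ς _ => ?_
          rw [Finset.sum_add_distrib, Finset.mul_sum, Finset.mul_sum]
          congr 1
          · exact Finset.sum_congr rfl fun j _ => by ring
          · exact Finset.sum_congr rfl fun j _ => by ring
      _ = ∑ ς : Fin ι, F t ς * ((a ς l : ℂ) + psi (κ + 1) t * (b ς l : ℂ)) := by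
          refine Finset.sum_congr rfl fun ς _ => ?_
          rw [shift (κ + 1) (fun j => V j ς) t]
          rw [hF]
          ring
  have hPU : ∑ t : ZMod (κ + 1), ∑ l : Fin m,
      Complex.normSq (∑ ς : Fin ι, F t ς * ((a ς l : ℂ) + psi (κ + 1) t * (b ς l : ℂ)))
      = (κ + 1 : ℕ) * ∑ j : ZMod (κ + 1), ∑ l : Fin m, Complex.normSq (U j l) := by
    have h1 : ∀ t l, Complex.normSq (∑ ς : Fin ι, F t ς *
        ((a ς l : ℂ) + psi (κ + 1) t * (b ς l : ℂ))) =
        Complex.normSq (∑ j : ZMod (κ + 1), U j l * psi (κ + 1) (j * t)) := by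
      intro t l; rw [hYfreq t l]
    rw [Finset.sum_congr rfl fun t _ => Finset.sum_congr rfl fun l _ => h1 t l]
    rw [Finset.sum_comm]
    rw [Finset.sum_congr rfl fun l _ => parseval (κ + 1) (fun j => U j l)]
    rw [← Finset.mul_sum, Finset.sum_comm]
  have hPV : ∑ t : ZMod (κ + 1), ∑ ς : Fin ι, Complex.normSq (F t ς)
      = (κ + 1 : ℕ) * ∑ j : ZMod (κ + 1), ∑ ς : Fin ι, Complex.normSq (V j ς) := by
    rw [Finset.sum_comm]
    rw [Finset.sum_congr rfl fun ς _ => parseval (κ + 1) (fun j => V j ς)]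
    rw [← Finset.mul_sum, Finset.sum_comm]
  have habs : ∀ t : ZMod (κ + 1), ‖psi (κ + 1) t‖ = 1 := fun t => by
    exact psi_abs _ t
  have hlow' : c * ((κ + 1 : ℕ) * 1) ≤ (κ + 1 : ℕ) * quadForm (R * Rᵀ) v := by
    calc c * ((κ + 1 : ℕ) * 1)
        = c * ∑ t : ZMod (κ + 1), ∑ ς : Fin ι, Complex.normSq (F t ς) := by
          rw [hPV, hnormV]
      _ ≤ ∑ t : ZMod (κ + 1), ∑ l : Fin m, Complex.normSq
            (∑ ς : Fin ι, F t ς * ((a ς l : ℂ) + psi (κ + 1) t * (b ς l : ℂ))) := by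
          rw [Finset.mul_sum]
          exact Finset.sum_le_sum fun t _ => hlow (psi (κ + 1) t) (habs t) (fun ς => F t ς)
      _ = (κ + 1 : ℕ) * quadForm (R * Rᵀ) v := by rw [hPU, hquad]
  have hup' : (κ + 1 : ℕ) * quadForm (R * Rᵀ) v ≤ Cb * ((κ + 1 : ℕ) * 1) := by
    calc (κ + 1 : ℕ) * quadForm (R * Rᵀ) v
        = ∑ t : ZMod (κ + 1), ∑ l : Fin m, Complex.normSq
            (∑ ς : Fin ι, F t ς * ((a ς l : ℂ) + psi (κ + 1) t * (b ς l : ℂ))) := by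
          rw [hPU, hquad]
      _ ≤ Cb * ∑ t : ZMod (κ + 1), ∑ ς : Fin ι, Complex.normSq (F t ς) := by
          rw [Finset.mul_sum]
          exact Finset.sum_le_sum fun t _ => hup (psi (κ + 1) t) (habs t) (fun ς => F t ς)
      _ = Cb * ((κ + 1 : ℕ) * 1) := by rw [hPV, hnormV]
  have hκpos : (0 : ℝ) < (κ + 1 : ℕ) := by positivity
  constructor
  · have := hlow'
    rw [mul_comm c ((κ + 1 : ℕ) * 1)] at this
    nlinarith
  · nlinarith

end St18

/-- Lemma 7.1 of the supplement: uniform eigenvalue bounds for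
the spline continuity-restriction matrix. For the matrix `R(κ)` of `ῑ` continuity
restrictions at each of `κ` interior knots, expressed in the normalized Legendre
basis on each of the `κ+1` intervals, the eigenvalues of `R(κ)R(κ)'` are bounded
and bounded away from zero uniformly in `κ`. -/
theorem statement18 (m ι : ℕ) (hm : 2 ≤ m) (hι1 : 1 ≤ ι) (hιm : ι ≤ m - 1) :
    ∃ c C : ℝ, 0 < c ∧ c ≤ C ∧
      ∀ κ : ℕ, 1 ≤ κ →
        (let R : Matrix (Fin κ × Fin ι) (Fin (κ + 1) × Fin m) ℝ :=
          fun kς jl =>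
            if (jl.1 : ℕ) = (kς.1 : ℕ) then
              iteratedDeriv (kς.2 : ℕ) (legendreNorm (jl.2 : ℕ)) 1
            else if (jl.1 : ℕ) = (kς.1 : ℕ) + 1 then
              -(iteratedDeriv (kς.2 : ℕ) (legendreNorm (jl.2 : ℕ)) (-1))
            else 0
        c ≤ lamMin (R * Rᵀ) ∧ lamMax (R * Rᵀ) ≤ C) := by
  classical
  set a : Fin ι → Fin m → ℝ :=
    fun ς l => iteratedDeriv (ς : ℕ) (legendreNorm (l : ℕ)) 1 with ha
  set b : Fin ι → Fin m → ℝ :=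
    fun ς l => -(iteratedDeriv (ς : ℕ) (legendreNorm (l : ℕ)) (-1)) with hb
  have haval : ∀ (ς : Fin ι) (L : ℕ),
      ((iteratedDeriv (ς : ℕ) (legendreNorm L) 1 : ℝ) : ℂ) =
        ((Polynomial.derivative (R := ℂ))^[(ς : ℕ)] (St18.qC L)).eval 1 := by
    intro ς L
    rw [St18.legendreNorm_fun, St18.iteratedDeriv_eval]
    rw [St18.qC, show (1 : ℂ) = ((1 : ℝ) : ℂ) by norm_num, St18.eval_iter_map]
  have hbval : ∀ (ς : Fin ι) (L : ℕ),
      ((iteratedDeriv (ς : ℕ) (legendreNorm L) (-1) : ℝ) : ℂ) =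
        ((Polynomial.derivative (R := ℂ))^[(ς : ℕ)] (St18.qC L)).eval (-1) := by
    intro ς L
    rw [St18.legendreNorm_fun, St18.iteratedDeriv_eval]
    rw [St18.qC, show (-1 : ℂ) = ((-1 : ℝ) : ℂ) by norm_num, St18.eval_iter_map]
  have hrank : ∀ z : ℂ, ‖z‖ = 1 → ∀ x : Fin ι → ℂ,
      (∀ l : Fin m, ∑ ς, x ς * ((a ς l : ℂ) + z * (b ς l : ℂ)) = 0) → x = 0 := by
    intro z _ x hx
    apply St18.coeff_vanish m ι hm hιm z x
    intro nn hnn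
    have h1 : (Polynomial.X ^ nn : Polynomial ℂ).natDegree < m := by
      rw [Polynomial.natDegree_X_pow]; exact hnn
    refine St18.span_vanish (fun l => St18.qC l) (fun l _ => St18.qC_natDegree l)
      (fun l _ => St18.qC_ne_zero l) (St18.Lmap ι x z) ?_ (Polynomial.X ^ nn) h1
    intro l hl
    have hxl := hx ⟨l, hl⟩
    rw [St18.Lmap_apply]
    rw [← hxl]
    refine Finset.sum_congr rfl fun ς _ => ?_
    have h2 : ((a ς (⟨l, hl⟩ : Fin m) : ℝ) : ℂ) =
        ((Polynomial.derivative (R := ℂ))^[(ς : ℕ)] (St18.qC l)).eval 1 := by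
      rw [ha]; exact haval ς l
    have h3 : ((b ς (⟨l, hl⟩ : Fin m) : ℝ) : ℂ) =
        -(((Polynomial.derivative (R := ℂ))^[(ς : ℕ)] (St18.qC l)).eval (-1)) := by
      rw [hb]
      push_cast
      rw [hbval ς l]
    rw [h2, h3]
    ring
  obtain ⟨c, hc, hlow⟩ := St18.lower_bound m ι hι1 a b hrank
  set Cb : ℝ := ∑ l : Fin m, ∑ ς : Fin ι, (|a ς l| + |b ς l|) ^ 2 with hCb
  have hCb0 : 0 ≤ Cb :=
    Finset.sum_nonneg fun _ _ => Finset.sum_nonneg fun _ _ => sq_nonneg _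
  have hup : ∀ z : ℂ, ‖z‖ = 1 → ∀ x : Fin ι → ℂ,
      (∑ l : Fin m, Complex.normSq (∑ ς, x ς * ((a ς l : ℂ) + z * (b ς l : ℂ)))) ≤
        Cb * (∑ ς, Complex.normSq (x ς)) :=
    fun z hz x => St18.upper_bound m ι a b z hz x
  refine ⟨c, Cb + c, hc, by linarith, ?_⟩
  intro κ hκ
  intro R
  have hbounds : ∀ v : Fin κ × Fin ι → ℝ, (∑ k, v k ^ 2 = 1) →
      c ≤ quadForm (St18.Rmat m ι κ a b * (St18.Rmat m ι κ a b)ᵀ) v ∧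
        quadForm (St18.Rmat m ι κ a b * (St18.Rmat m ι κ a b)ᵀ) v ≤ Cb :=
    fun v hv => St18.quad_bounds m ι κ a b c Cb hlow hup v hv
  set p : Fin κ × Fin ι := ((⟨0, hκ⟩ : Fin κ), (⟨0, hι1⟩ : Fin ι)) with hp
  set v₀ : Fin κ × Fin ι → ℝ := fun kς => if kς = p then 1 else 0 with hv₀def
  have hv₀ : ∑ k, v₀ k ^ 2 = 1 := by
    have hsq : ∀ k : Fin κ × Fin ι, (v₀ k) ^ 2 = if k = p then 1 else 0 := by
      intro k
      rw [hv₀def]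
      by_cases h : k = p <;> simp [h]
    rw [Finset.sum_congr rfl fun k _ => hsq k,
      Finset.sum_ite_eq' Finset.univ p fun _ => (1 : ℝ)]
    simp
  have h1 : c ≤ lamMin (St18.Rmat m ι κ a b * (St18.Rmat m ι κ a b)ᵀ) := by
    unfold lamMin
    refine le_csInf ⟨_, ⟨v₀, hv₀, rfl⟩⟩ ?_
    rintro r ⟨v, hv, rfl⟩
    exact (hbounds v hv).1
  have h2 : lamMax (St18.Rmat m ι κ a b * (St18.Rmat m ι κ a b)ᵀ) ≤ Cb + c := by
    unfold lamMax
    refine csSup_le ⟨_, ⟨v₀, hv₀, rfl⟩⟩ ?_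
    rintro r ⟨v, hv, rfl⟩
    exact le_trans (hbounds v hv).2 (by linarith)
  exact ⟨h1, h2⟩
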